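/- arXiv:1509.05018 — 10 statements merged into one kernel-verified Lean document; each statement's English description precedes it below -/
import Mathlib

section
/- Let f be a homeomorphism of a compact topological space X. Then f is orbit expansive if and only if there is a neighborhood U ⊆ X × X of the diagonal Δ = {(x,x) : x ∈ X} such that whenever x ≠ y there exists n ∈ ℤ with (fⁿ(x), fⁿ(y)) ∉ U. -/
open Set

/-- The `n`-th iterate (`n : ℤ`) of a homeomorphism `f`, as a function. -/
def Homeomorph.zpow {X : Type*} [TopologicalSpace X] (f : X ≃ₜ X) (n : ℤ) : X → X :=
  ⇑(f.toEquiv ^ n)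

/-- `U = {U 0, …, U (l-1)}` is an o-expansive covering for the homeomorphism `f`:
it is a finite open cover such that any two points whose whole orbits stay
`U`-close must coincide. -/
def IsOExpansiveCover {X : Type*} [TopologicalSpace X] {l : ℕ} (f : X ≃ₜ X)
    (U : Fin l → Set X) : Prop :=
  (∀ i, IsOpen (U i)) ∧ (⋃ i, U i) = Set.univ ∧
    ∀ x y : X, (∀ n : ℤ, ∃ i, f.zpow n x ∈ U i ∧ f.zpow n y ∈ U i) → x = y

/-- A homeomorphism is orbit expansive if it admits an o-expansive covering. -/
def OrbitExpansive {X : Type*} [TopologicalSpace X] (f : X ≃ₜ X) : Prop :=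
  ∃ (l : ℕ) (U : Fin l → Set X), IsOExpansiveCover f U

/-- `U` is an r-expansivity covering for `f`: a finite open cover such that for every
open cover `V` and every sequence `k : ℤ → Fin n` there is `N` with
`⋂_{|j| ≤ N} f^j(U (k j))` contained in a member of `V`. -/
def IsRExpansiveCover {X : Type*} [TopologicalSpace X] {n : ℕ} (f : X ≃ₜ X)
    (U : Fin n → Set X) : Prop :=
  (∀ i, IsOpen (U i)) ∧ (⋃ i, U i) = Set.univ ∧
    ∀ V : Set (Set X), (∀ v ∈ V, IsOpen v) → ⋃₀ V = Set.univ →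
      ∀ k : ℤ → Fin n, ∃ N : ℕ, ∃ v ∈ V,
        (⋂ j ∈ Set.Icc (-(N : ℤ)) (N : ℤ), f.zpow j '' U (k j)) ⊆ v

/-- A homeomorphism is refinement expansive if it admits an r-expansivity covering. -/
def RefinementExpansive {X : Type*} [TopologicalSpace X] (f : X ≃ₜ X) : Prop :=
  ∃ (n : ℕ) (U : Fin n → Set X), IsRExpansiveCover f U

/-- `U` is a uniform r-expansivity covering for `f`: `N` can be chosen uniformly in the
sequence `k`. -/
def IsUniformRExpansiveCover {X : Type*} [TopologicalSpace X] {n : ℕ} (f : X ≃ₜ X)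
    (U : Fin n → Set X) : Prop :=
  (∀ i, IsOpen (U i)) ∧ (⋃ i, U i) = Set.univ ∧
    ∀ V : Set (Set X), (∀ v ∈ V, IsOpen v) → ⋃₀ V = Set.univ →
      ∃ N : ℕ, ∀ k : ℤ → Fin n, ∃ v ∈ V,
        (⋂ j ∈ Set.Icc (-(N : ℤ)) (N : ℤ), f.zpow j '' U (k j)) ⊆ v

/-- A homeomorphism is uniformly refinement expansive if it admits a uniform
r-expansivity covering. -/
def UniformlyRefinementExpansive {X : Type*} [TopologicalSpace X] (f : X ≃ₜ X) : Prop :=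
  ∃ (n : ℕ) (U : Fin n → Set X), IsUniformRExpansiveCover f U

/-- Proposition 2.4: on a compact space, `f` is orbit expansive iff there is a
neighborhood `U` of the diagonal such that distinct points get separated from `U`
by some iterate of `f`. -/
theorem orbitExpansive_iff_exists_nhds_diagonal
    {X : Type*} [TopologicalSpace X] [CompactSpace X] (f : X ≃ₜ X) :
    OrbitExpansive f ↔
      ∃ U : Set (X × X), U ∈ nhdsSet (Set.diagonal X) ∧
        ∀ x y : X, x ≠ y → ∃ n : ℤ, (f.zpow n x, f.zpow n y) ∉ U := by
  constructor
  · rintro ⟨l, U, hopen, hcov, hexp⟩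
    refine ⟨⋃ i, U i ×ˢ U i, ?_, ?_⟩
    · refine (isOpen_iUnion fun i => (hopen i).prod (hopen i)).mem_nhdsSet.mpr ?_
      rintro ⟨x, y⟩ hxy
      rcases (Set.eq_univ_iff_forall.mp hcov x) with ⟨_, ⟨i, rfl⟩, hxi⟩
      exact Set.mem_iUnion.mpr ⟨i, hxi, hxy ▸ hxi⟩
    · intro x y hxy
      by_contra h
      push_neg at h
      refine hxy (hexp x y fun n => ?_)
      rcases Set.mem_iUnion.mp (h n) with ⟨i, hi⟩
      exact ⟨i, hi.1, hi.2⟩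
  · rintro ⟨U, hU, hsep⟩
    have hV : ∀ x : X, ∃ V : Set X, IsOpen V ∧ x ∈ V ∧ V ×ˢ V ⊆ U := by
      intro x
      have : U ∈ nhds (x, x) := nhds_le_nhdsSet (Set.mem_diagonal x) hU
      rcases mem_nhds_prod_iff.mp this with ⟨s, hs, t, ht, hst⟩
      refine ⟨interior (s ∩ t), isOpen_interior, ?_, ?_⟩
      · exact mem_interior_iff_mem_nhds.mpr (Filter.inter_mem hs ht)
      · rintro ⟨a, b⟩ ⟨ha, hb⟩
        exact hst ⟨(interior_subset ha).1, (interior_subset hb).2⟩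
    choose V hVopen hVmem hVsub using hV
    obtain ⟨t, ht⟩ := isCompact_univ.elim_finite_subcover V hVopen
      (fun x _ => Set.mem_iUnion.mpr ⟨x, hVmem x⟩)
    let e := t.equivFin.symm
    refine ⟨t.card, fun i => V (e i : X), fun i => hVopen _, ?_, ?_⟩
    · apply Set.eq_univ_of_univ_subset
      intro x hx
      rcases Set.mem_iUnion₂.mp (ht hx) with ⟨a, hat, hxa⟩
      exact Set.mem_iUnion.mpr ⟨e.symm ⟨a, hat⟩, by simpa using hxa⟩
    · intro x y hxy
      by_contra hne
      rcases hsep x y hne with ⟨n, hn⟩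
      rcases hxy n with ⟨i, h1, h2⟩
      exact hn (hVsub (e i : X) ⟨h1, h2⟩)
end

section
/- If a topological space X admits an orbit expansive homeomorphism, then X is a T1 space. -/
open Set

lemma Homeomorph.zpow_continuous {X : Type*} [TopologicalSpace X] (f : X ≃ₜ X) (n : ℤ) :
    Continuous (f.zpow n) := by
  induction n using Int.induction_on with
  | zero => simpa [Homeomorph.zpow] using continuous_id
  | succ k ih =>
    have h : f.zpow (k + 1) = f.zpow k ∘ f := by
      funext x
      simp [Homeomorph.zpow, zpow_add, Equiv.Perm.mul_apply]
    rw [h]; exact ih.comp f.continuous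
  | pred k ih =>
    have h : f.zpow (-(k : ℤ) - 1) = f.zpow (-k) ∘ f.symm := by
      funext x
      have h2 : f.toEquiv ^ (-(k : ℤ) - 1) = f.toEquiv ^ (-(k : ℤ)) * (f.toEquiv)⁻¹ := by
        rw [← zpow_neg_one, ← zpow_add]; ring_nf
      simp only [Homeomorph.zpow, h2, Equiv.Perm.mul_apply, Function.comp_apply]
      rfl
    rw [h]; exact ih.comp f.symm.continuous

/-- Proposition 2.5: a space admitting an orbit expansive homeomorphism is `T₁`. -/
theorem t1Space_of_orbitExpansive {X : Type*} [TopologicalSpace X]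
    (f : X ≃ₜ X) (hf : OrbitExpansive f) : T1Space X := by
  obtain ⟨l, U, hUo, hUc, hexp⟩ := hf
  rw [t1Space_iff_exists_open]
  intro x y hxy
  by_contra hcon
  push_neg at hcon
  apply hxy
  apply hexp
  intro n
  have hx : f.zpow n x ∈ ⋃ i, U i := by rw [hUc]; trivial
  obtain ⟨i, hi⟩ := Set.mem_iUnion.mp hx
  exact ⟨i, hi, hcon ((f.zpow n) ⁻¹' (U i)) ((hUo i).preimage (f.zpow_continuous n)) hi⟩
end

section
/- Let X be a compact Hausdorff topological space and let f : X → X be an orbit expansive homeomorphism. Then for every metric d on X generating the topology of X, there exists δ > 0 such that whenever x, y ∈ X with x ≠ y, there exists n ∈ ℤ with d(fⁿ(x), fⁿ(y)) ≥ δ. -/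
open Set

/-- Remark 2.10: if `X` is compact Hausdorff and `f` is orbit expansive, then every
metric generating the topology of `X` is an expansivity metric for `f`. -/
theorem exists_expansivity_constant_of_orbitExpansive
    {X : Type*} [t : TopologicalSpace X] [CompactSpace X] [T2Space X]
    (f : X ≃ₜ X) (hf : OrbitExpansive f)
    (m : MetricSpace X) (hm : m.toUniformSpace.toTopologicalSpace = t) :
    ∃ δ : ℝ, 0 < δ ∧ ∀ x y : X, x ≠ y →
      ∃ n : ℤ, δ ≤ @dist X m.toDist (f.zpow n x) (f.zpow n y) := by
  subst hm
  obtain ⟨l, U, hopen, hcov, hexp⟩ := hf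
  obtain ⟨δ, hδ, hleb⟩ := lebesgue_number_lemma_of_metric
    (s := (Set.univ : Set X)) isCompact_univ hopen (by rw [hcov])
  refine ⟨δ, hδ, fun x y hxy => ?_⟩
  by_contra h
  push_neg at h
  apply hxy
  apply hexp
  intro n
  obtain ⟨i, hi⟩ := hleb (f.zpow n x) (mem_univ _)
  exact ⟨i, hi (Metric.mem_ball_self hδ), hi (by simpa [Metric.mem_ball, dist_comm] using h n)⟩
end

section
/- Let X be an infinite set equipped with the cofinite topology (a set is open if and only if it is empty or has finite complement). Then no homeomorphism of X is orbit expansive. -/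
open Set

private lemma Homeomorph.zpow_add' {X : Type*} [TopologicalSpace X] (f : X ≃ₜ X)
    (a b : ℤ) (x : X) : f.zpow (a + b) x = f.zpow a (f.zpow b x) := by
  simp [Homeomorph.zpow, zpow_add, Equiv.Perm.mul_apply]

private lemma Homeomorph.zpow_zero' {X : Type*} [TopologicalSpace X] (f : X ≃ₜ X)
    (x : X) : f.zpow 0 x = x := by
  simp [Homeomorph.zpow]

private lemma fixed_zpow {X : Type*} (p : Equiv.Perm X) (z : X) (h : p z = z) :
    ∀ k : ℤ, (p ^ k) z = z := by
  have h' : p⁻¹ z = z := by nth_rewrite 1 [← h]; simp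
  intro k
  induction k using Int.induction_on with
  | zero => simp
  | succ k ih => rw [zpow_add_one, Equiv.Perm.mul_apply, h, ih]
  | pred k ih => rw [zpow_sub_one, Equiv.Perm.mul_apply, h', ih]

private lemma inj_of_infinite_range {X : Type*} (p : Equiv.Perm X) (z : X)
    (h : (Set.range fun n : ℤ => (p ^ n) z).Infinite) :
    Function.Injective fun n : ℤ => (p ^ n) z := by
  by_contra hinj
  apply h
  rw [Function.not_injective_iff] at hinj
  obtain ⟨a, b, hab, hne⟩ := hinj
  -- p^(a-b) fixes z
  have he : (p ^ (a - b)) z = z := by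
    have : p ^ (a - b) = p ^ (-b) * p ^ a := by
      rw [← zpow_add]; ring_nf
    rw [this, Equiv.Perm.mul_apply, hab, ← Equiv.Perm.mul_apply, ← zpow_add]
    simp
  set d : ℤ := |a - b| with hd
  have hdpos : 0 < d := abs_pos.mpr (sub_ne_zero.mpr hne)
  have hdz : (p ^ d) z = z := by
    rcases abs_choice (a - b) with h1 | h1
    · rw [hd, h1]; exact he
    · rw [hd, h1, zpow_neg]
      conv_lhs => rw [← he]
      simp
  have hsub : (Set.range fun n : ℤ => (p ^ n) z) ⊆
      (fun m : ℤ => (p ^ m) z) '' Set.Ico 0 d := by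
    rintro w ⟨n, rfl⟩
    refine ⟨n % d, ⟨Int.emod_nonneg n hdpos.ne', Int.emod_lt_of_pos n hdpos⟩, ?_⟩
    have hfix : (p ^ (d * (n / d))) z = z := by
      rw [zpow_mul]; exact fixed_zpow (p ^ d) z hdz _
    have : (p ^ n) z = (p ^ (n % d)) ((p ^ (d * (n / d))) z) := by
      rw [← Equiv.Perm.mul_apply, ← zpow_add]
      congr 1
      rw [add_comm, Int.mul_ediv_add_emod]
    simp only at this ⊢
    rw [this, hfix]
  exact ((Set.finite_Ico 0 d).image _).subset hsub

/-- Proposition 2.13: no homeomorphism of an infinite set with the cofinite topology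
is orbit expansive. -/
theorem cofinite_no_orbitExpansive {X : Type*} [TopologicalSpace X] [Infinite X]
    (htop : ∀ s : Set X, IsOpen s ↔ s = ∅ ∨ sᶜ.Finite)
    (f : X ≃ₜ X) : ¬ OrbitExpansive f := by
  rintro ⟨l, U, hopen, hcover, hexp⟩
  -- the finite "bad" set: union of complements of nonempty members
  set F : Set X := ⋃ i ∈ {i : Fin l | (U i).Nonempty}, (U i)ᶜ with hFdef
  have hF : F.Finite := by
    refine Set.Finite.biUnion (Set.toFinite _) fun i hi => ?_
    rcases (htop (U i)).1 (hopen i) with h | h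
    · exact absurd h (Set.nonempty_iff_ne_empty.mp hi)
    · exact h
  have hnotF : ∀ x : X, x ∉ F → ∀ i : Fin l, (U i).Nonempty → x ∈ U i := by
    intro x hx i hi
    by_contra hxi
    exact hx (Set.mem_biUnion hi hxi)
  have hcov : ∀ x : X, ∃ i, x ∈ U i := by
    intro x
    have : x ∈ ⋃ i, U i := hcover ▸ Set.mem_univ x
    exact Set.mem_iUnion.mp this
  -- key: a pair whose orbits never simultaneously hit F contradicts expansivity
  have hkey : ∀ x y : X, x ≠ y →
      (∀ n : ℤ, f.zpow n x ∉ F ∨ f.zpow n y ∉ F) → False := by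
    intro x y hxy h
    apply hxy
    apply hexp x y
    intro n
    rcases h n with hn | hn
    · obtain ⟨i, hi⟩ := hcov (f.zpow n y)
      exact ⟨i, hnotF _ hn i ⟨_, hi⟩, hi⟩
    · obtain ⟨i, hi⟩ := hcov (f.zpow n x)
      exact ⟨i, hi, hnotF _ hn i ⟨_, hi⟩⟩
  -- the union of the orbits of points of F
  set A : Set X := ⋃ z ∈ F, Set.range fun n : ℤ => f.zpow n z with hAdef
  have horbit : ∀ x : X, x ∉ A → ∀ n : ℤ, f.zpow n x ∉ F := by
    intro x hx n hn
    apply hx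
    refine Set.mem_biUnion hn ⟨-n, ?_⟩
    simp only
    rw [← Homeomorph.zpow_add', neg_add_cancel, Homeomorph.zpow_zero']
  by_cases hsub : Aᶜ.Subsingleton
  · -- A is infinite, hence some orbit of a point of F is infinite
    have hAinf : A.Infinite := by
      intro hfin
      have : (Set.univ : Set X).Finite := by
        have : (Set.univ : Set X) = A ∪ Aᶜ := by simp
        rw [this]
        exact hfin.union hsub.finite
      exact Set.infinite_univ this
    have hz : ∃ z ∈ F, (Set.range fun n : ℤ => f.zpow n z).Infinite := by
      by_contra h
      push_neg at h
      exact hAinf (hF.biUnion fun z hz => (h z hz))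
    obtain ⟨z, hzF, hzinf⟩ := hz
    have hinj : Function.Injective fun n : ℤ => f.zpow n z :=
      inj_of_infinite_range f.toEquiv z hzinf
    -- the set of times the orbit of z is in F is finite
    have hNfin : ((fun n : ℤ => f.zpow n z) ⁻¹' F).Finite :=
      hF.preimage hinj.injOn
    obtain ⟨ub, hub⟩ := hNfin.bddAbove
    obtain ⟨lb, hlb⟩ := hNfin.bddBelow
    set m : ℤ := max (ub - lb + 1) 1 with hm
    have hm1 : 1 ≤ m := le_max_right _ _
    refine hkey z (f.zpow m z) ?_ ?_
    · intro h
      have : (0 : ℤ) = m := by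
        apply hinj
        simp only
        rw [Homeomorph.zpow_zero']
        exact h
      omega
    · intro n
      by_cases hn : f.zpow n z ∈ F
      · right
        rw [← Homeomorph.zpow_add']
        intro hmem
        have h1 : n + m ≤ ub := hub hmem
        have h2 : lb ≤ n := hlb hn
        have h3 : ub - lb + 1 ≤ m := le_max_left _ _
        omega
      · left; exact hn
  · -- two points outside A
    rw [Set.not_subsingleton_iff] at hsub
    obtain ⟨x, hx, y, hy, hxy⟩ := hsub
    exact hkey x y hxy fun n => Or.inl (horbit x hx n)
end

section
/- Let f : X → X be a homeomorphism of a topological space X admitting an o-expansive covering U = {U_1,...,U_l} of cardinality l. Then for each n ≥ 1, the set {p ∈ X : fⁿ(p) = p} of points of period n has at most l^n elements. -/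
open Set

/-- Proposition 2.15: if `f` has an o-expansive covering with `l` elements then for
each `n ≥ 1` there are at most `l ^ n` points of period `n`. -/
theorem card_periodic_le_of_oExpansiveCover {X : Type*} [TopologicalSpace X] {l : ℕ}
    (f : X ≃ₜ X) (U : Fin l → Set X) (hU : IsOExpansiveCover f U)
    (n : ℕ) (hn : 1 ≤ n) :
    {p : X | f.zpow (n : ℤ) p = p}.encard ≤ ((l ^ n : ℕ) : ℕ∞) := by
  classical
  obtain ⟨hopen, hcov, hexp⟩ := hU
  have hmem : ∀ x : X, ∃ i, x ∈ U i := by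
    intro x
    have : x ∈ ⋃ i, U i := hcov ▸ Set.mem_univ x
    simpa using this
  choose idx hidx using hmem
  have hn' : (0 : ℤ) < (n : ℤ) := by exact_mod_cast hn
  set S := {p : X | f.zpow (n : ℤ) p = p} with hS
  have hper : ∀ r ∈ S, ∀ m : ℤ, f.zpow m r = f.zpow (m % (n : ℤ)) r := by
    intro r hr m
    have hfix : Function.IsFixedPt (⇑(f.toEquiv ^ (n : ℤ))) r := hr
    have h2 : Function.IsFixedPt (⇑((f.toEquiv ^ (n : ℤ)) ^ (m / (n : ℤ)))) r :=
      hfix.perm_zpow _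
    have hdecomp : m = m % (n : ℤ) + (n : ℤ) * (m / (n : ℤ)) := by
      rw [Int.add_comm]; exact (Int.mul_ediv_add_emod m n).symm
    have h3 : (f.toEquiv ^ ((n : ℤ) * (m / (n : ℤ)))) r = r := by
      rw [zpow_mul]; exact h2
    show (f.toEquiv ^ m) r = (f.toEquiv ^ (m % (n : ℤ))) r
    conv_lhs => rw [hdecomp]
    rw [zpow_add, Equiv.Perm.mul_apply, h3]
  have key : Set.InjOn (fun p => fun j : Fin n => idx (f.zpow (j : ℤ) p)) S := by
    intro p hp q hq h
    apply hexp
    intro m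
    have hlt : (m % (n : ℤ)).toNat < n := by
      have h0 : 0 ≤ m % (n : ℤ) := Int.emod_nonneg m hn'.ne'
      have h1 : m % (n : ℤ) < (n : ℤ) := Int.emod_lt_of_pos m hn'
      omega
    have hcast : ((⟨(m % (n : ℤ)).toNat, hlt⟩ : Fin n) : ℤ) = m % (n : ℤ) := by
      simp [Int.toNat_of_nonneg (Int.emod_nonneg m hn'.ne')]
    have heq := congrFun h (⟨(m % (n : ℤ)).toNat, hlt⟩ : Fin n)
    simp only [hcast] at heq
    refine ⟨idx (f.zpow (m % (n : ℤ)) p), ?_, ?_⟩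
    · rw [hper p hp m]; exact hidx _
    · rw [hper q hq m, heq]; exact hidx _
  calc S.encard = ((fun p => fun j : Fin n => idx (f.zpow (j : ℤ) p)) '' S).encard :=
        (key.encard_image).symm
    _ ≤ (Set.univ : Set (Fin n → Fin l)).encard := Set.encard_le_encard (Set.subset_univ _)
    _ = ((l ^ n : ℕ) : ℕ∞) := by
        simp [Set.encard_univ, ENat.card_eq_coe_natCard, Nat.card_fun]
end

section
/- Let f : X → X be a homeomorphism of a topological space X. If a finite open cover U = {U_1,...,U_n} of X is an r-expansivity covering for f, then U is a uniform r-expansivity covering for f. In particular, every refinement expansive homeomorphism is uniformly refinement expansive. -/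
open Set

/-- Theorem 3.7: every r-expansivity covering is a uniform r-expansivity covering;
in particular every refinement expansive homeomorphism is uniformly refinement
expansive. -/
theorem rExpansiveCover_uniform {X : Type*} [TopologicalSpace X] (f : X ≃ₜ X) :
    (∀ (n : ℕ) (U : Fin n → Set X),
        IsRExpansiveCover f U → IsUniformRExpansiveCover f U) ∧
      (RefinementExpansive f → UniformlyRefinementExpansive f) := by
  have main : ∀ (n : ℕ) (U : Fin n → Set X),
      IsRExpansiveCover f U → IsUniformRExpansiveCover f U := by
    intro n U hU
    obtain ⟨hopen, hcov, hmain⟩ := hU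
    refine ⟨hopen, hcov, ?_⟩
    intro V hVopen hVcov
    choose N v hvV hsub using hmain V hVopen hVcov
    -- cylinder sets
    set C : (ℤ → Fin n) → Set (ℤ → Fin n) :=
      fun k => {k' | ∀ j ∈ Finset.Icc (-(N k : ℤ)) (N k : ℤ), k' j = k j} with hC
    have hCopen : ∀ k, IsOpen (C k) := by
      intro k
      have : C k = ⋂ j ∈ Finset.Icc (-(N k : ℤ)) (N k : ℤ),
          (fun k' : ℤ → Fin n => k' j) ⁻¹' {k j} := by
        ext k'; simp [hC]
      rw [this]
      exact isOpen_biInter_finset fun j _ =>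
        (continuous_apply j).isOpen_preimage _ (isOpen_discrete _)
    have hCcov : (Set.univ : Set (ℤ → Fin n)) ⊆ ⋃ k, C k := fun k _ =>
      Set.mem_iUnion.mpr ⟨k, fun j _ => rfl⟩
    obtain ⟨s, hs⟩ := isCompact_univ.elim_finite_subcover C hCopen hCcov
    refine ⟨s.sup N, ?_⟩
    intro k
    have hk : k ∈ ⋃ k₀ ∈ s, C k₀ := hs (Set.mem_univ k)
    obtain ⟨k₀, hk₀s, hkC⟩ := Set.mem_iUnion₂.mp hk
    refine ⟨v k₀, hvV k₀, ?_⟩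
    refine Set.Subset.trans ?_ (hsub k₀)
    intro x hx
    simp only [Set.mem_iInter] at hx ⊢
    intro j hj
    have hle : N k₀ ≤ s.sup N := Finset.le_sup hk₀s
    have hj'' : j ∈ Set.Icc (-((s.sup N : ℕ) : ℤ)) ((s.sup N : ℕ) : ℤ) := by
      obtain ⟨h1, h2⟩ := hj
      have : (N k₀ : ℤ) ≤ ((s.sup N : ℕ) : ℤ) := by exact_mod_cast hle
      exact ⟨by omega, by omega⟩
    have heq : k j = k₀ j := hkC j (by
      simp only [Finset.mem_Icc]
      exact ⟨hj.1, hj.2⟩)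
    rw [← heq]
    exact hx j hj''
  exact ⟨main, fun h => h.elim fun n hn => hn.elim fun U hU => ⟨n, U, main n U hU⟩⟩
end

section
/- If a topological space X admits a refinement expansive homeomorphism, then X is compact. -/
open Set

/-- `s` can be covered by finitely many members of `V`. -/
def GoodSet {X : Type*} (V : Set (Set X)) (s : Set X) : Prop :=
  ∃ t : Finset (Set X), ↑t ⊆ V ∧ s ⊆ ⋃₀ ↑t

lemma goodSet_mono {X : Type*} {V : Set (Set X)} {s s' : Set X} (h : s ⊆ s')
    (hg : GoodSet V s') : GoodSet V s := by
  obtain ⟨t, ht, hsub⟩ := hg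
  exact ⟨t, ht, h.trans hsub⟩

lemma goodSet_iUnion {X : Type*} {V : Set (Set X)} {ι : Type*} [Fintype ι]
    {s : ι → Set X} (h : ∀ i, GoodSet V (s i)) : GoodSet V (⋃ i, s i) := by
  classical
  choose t ht hsub using h
  refine ⟨Finset.univ.biUnion t, ?_, ?_⟩
  · intro v hv
    simp only [Finset.coe_biUnion, Finset.mem_coe, Finset.mem_univ, iUnion_true, mem_iUnion] at hv
    obtain ⟨i, hi⟩ := hv
    exact ht i hi
  · intro x hx
    obtain ⟨i, hi⟩ := mem_iUnion.mp hx
    obtain ⟨v, hv, hxv⟩ := hsub i hi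
    exact ⟨v, by simp only [Finset.coe_biUnion, Finset.mem_coe, Finset.mem_univ, iUnion_true,
      mem_iUnion]; exact ⟨i, hv⟩, hxv⟩

/-- The cylinder set of level `N` for the itinerary `k`. -/
def CylSet {X : Type*} [TopologicalSpace X] {n : ℕ} (f : X ≃ₜ X) (U : Fin n → Set X)
    (N : ℕ) (k : ℤ → Fin n) : Set X :=
  ⋂ j ∈ Set.Icc (-(N : ℤ)) (N : ℤ), f.zpow j '' U (k j)

lemma cylSet_congr {X : Type*} [TopologicalSpace X] {n : ℕ} (f : X ≃ₜ X)
    (U : Fin n → Set X) (N : ℕ) {k k' : ℤ → Fin n}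
    (h : ∀ j ∈ Set.Icc (-(N : ℤ)) (N : ℤ), k j = k' j) :
    CylSet f U N k = CylSet f U N k' := by
  unfold CylSet
  apply iInter₂_congr
  intro j hj
  rw [h j hj]

lemma cylSet_zero {X : Type*} [TopologicalSpace X] {n : ℕ} (f : X ≃ₜ X)
    (U : Fin n → Set X) (k : ℤ → Fin n) : CylSet f U 0 k = U (k 0) := by
  unfold CylSet
  have : Set.Icc (-(0 : ℕ) : ℤ) ((0 : ℕ) : ℤ) = {0} := by ext j; simp
  rw [this]
  simp [Homeomorph.zpow]

lemma cylSet_succ {X : Type*} [TopologicalSpace X] {n : ℕ} (f : X ≃ₜ X)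
    (U : Fin n → Set X) (N : ℕ) (k : ℤ → Fin n) :
    CylSet f U (N + 1) k =
      (f.zpow ((N : ℤ) + 1) '' U (k ((N : ℤ) + 1))) ∩
        ((f.zpow (-((N : ℤ) + 1)) '' U (k (-((N : ℤ) + 1)))) ∩ CylSet f U N k) := by
  unfold CylSet
  have : Set.Icc (-((N + 1 : ℕ)) : ℤ) ((N + 1 : ℕ) : ℤ) =
      insert ((N : ℤ) + 1) (insert (-((N : ℤ) + 1)) (Set.Icc (-(N : ℤ)) (N : ℤ))) := by
    ext j; simp; omega
  rw [this, Set.biInter_insert, Set.biInter_insert]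

lemma zpow_image_cover {X : Type*} [TopologicalSpace X] {n : ℕ} (f : X ≃ₜ X)
    {U : Fin n → Set X} (hU : (⋃ i, U i) = Set.univ) (m : ℤ) :
    (⋃ i, f.zpow m '' U i) = Set.univ := by
  rw [← Set.image_iUnion, hU, Set.image_univ]
  exact (f.toEquiv ^ m).surjective.range_eq

lemma cylSet_step {X : Type*} [TopologicalSpace X] {n : ℕ} (f : X ≃ₜ X)
    {U : Fin n → Set X} (hU : (⋃ i, U i) = Set.univ) {V : Set (Set X)}
    (N : ℕ) (k : ℤ → Fin n) (hk : ¬ GoodSet V (CylSet f U N k)) :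
    ∃ k' : ℤ → Fin n, (∀ j ∈ Set.Icc (-(N : ℤ)) (N : ℤ), k' j = k j) ∧
      ¬ GoodSet V (CylSet f U (N + 1) k') := by
  classical
  by_contra hall
  push_neg at hall
  apply hk
  set upd : Fin n → Fin n → (ℤ → Fin n) := fun a b =>
    Function.update (Function.update k ((N : ℤ) + 1) a) (-((N : ℤ) + 1)) b with hupd
  have hne : ((N : ℤ) + 1) ≠ (-((N : ℤ) + 1)) := by omega
  have hagree : ∀ a b, ∀ j ∈ Set.Icc (-(N : ℤ)) (N : ℤ), upd a b j = k j := by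
    intro a b j hj
    simp only [Set.mem_Icc] at hj
    simp only [hupd]
    rw [Function.update_of_ne (show j ≠ -((N:ℤ)+1) by omega),
      Function.update_of_ne (show j ≠ (N:ℤ)+1 by omega)]
  refine goodSet_mono ?_ (goodSet_iUnion (s := fun a : Fin n =>
    ⋃ b : Fin n, CylSet f U (N + 1) (upd a b)) ?_)
  · intro x hx
    have ha : x ∈ ⋃ i, f.zpow ((N : ℤ) + 1) '' U i := by
      rw [zpow_image_cover f hU]; trivial
    have hb : x ∈ ⋃ i, f.zpow (-((N : ℤ) + 1)) '' U i := by
      rw [zpow_image_cover f hU]; trivial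
    obtain ⟨a, ha⟩ := Set.mem_iUnion.mp ha
    obtain ⟨b, hb⟩ := Set.mem_iUnion.mp hb
    refine Set.mem_iUnion.mpr ⟨a, Set.mem_iUnion.mpr ⟨b, ?_⟩⟩
    rw [cylSet_succ]
    have e1 : upd a b ((N : ℤ) + 1) = a := by
      simp only [hupd]; rw [Function.update_of_ne hne, Function.update_self]
    have e2 : upd a b (-((N : ℤ) + 1)) = b := by
      simp only [hupd]; rw [Function.update_self]
    rw [e1, e2]
    refine ⟨ha, hb, ?_⟩
    rwa [cylSet_congr f U N (hagree a b)]
  · intro a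
    exact goodSet_iUnion fun b => hall (upd a b) (hagree a b)

/-- Corollary 3.8: a space admitting a refinement expansive homeomorphism is compact. -/
theorem compactSpace_of_refinementExpansive {X : Type*} [TopologicalSpace X]
    (f : X ≃ₜ X) (hf : RefinementExpansive f) : CompactSpace X := by
  classical
  obtain ⟨n, U, hUopen, hUcover, hexp⟩ := hf
  refine ⟨isCompact_of_finite_subcover ?_⟩
  intro ι W hWopen hWcover
  by_contra hno
  push_neg at hno
  set V : Set (Set X) := Set.range W with hV
  have hVopen : ∀ v ∈ V, IsOpen v := by rintro v ⟨i, rfl⟩; exact hWopen i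
  have hVcover : ⋃₀ V = Set.univ := by
    rw [hV, Set.sUnion_range]
    exact Set.eq_univ_of_univ_subset hWcover
  have hnotgood : ¬ GoodSet V Set.univ := by
    rintro ⟨t, htV, hcov⟩
    have hidx : ∀ s : {s // s ∈ t}, ∃ i, W i = s.1 := fun s => htV s.2
    choose idx hidx using hidx
    refine hno (t.attach.image idx) ?_
    intro x _
    obtain ⟨s, hs, hxs⟩ := hcov (Set.mem_univ x)
    refine Set.mem_iUnion₂.mpr ⟨idx ⟨s, hs⟩, ?_, ?_⟩
    · exact Finset.mem_image.mpr ⟨⟨s, hs⟩, t.mem_attach _, rfl⟩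
    · rw [hidx ⟨s, hs⟩]; exact hxs
  -- base case
  have hbase : ∃ k : ℤ → Fin n, ¬ GoodSet V (CylSet f U 0 k) := by
    by_contra h0
    push_neg at h0
    apply hnotgood
    rw [← hUcover]
    exact goodSet_iUnion fun i => by
      have := h0 (fun _ => i); rwa [cylSet_zero] at this
  obtain ⟨k0, hk0⟩ := hbase
  -- recursive construction
  have step' : ∀ (N : ℕ) (t : {k : ℤ → Fin n // ¬ GoodSet V (CylSet f U N k)}),
      ∃ k' : ℤ → Fin n, (∀ j ∈ Set.Icc (-(N : ℤ)) (N : ℤ), k' j = t.1 j) ∧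
        ¬ GoodSet V (CylSet f U (N + 1) k') :=
    fun N t => cylSet_step f hUcover N t.1 t.2
  choose F hF1 hF2 using step'
  let g : ∀ N : ℕ, {k : ℤ → Fin n // ¬ GoodSet V (CylSet f U N k)} :=
    fun N => Nat.rec ⟨k0, hk0⟩ (fun N t => ⟨F N t, hF2 N t⟩) N
  have hg_succ : ∀ N, (g (N + 1)).1 = F N (g N) := fun N => rfl
  have hagree : ∀ N M : ℕ, N ≤ M → ∀ j ∈ Set.Icc (-(N : ℤ)) (N : ℤ),
      (g M).1 j = (g N).1 j := by
    intro N M hNM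
    induction M, hNM using Nat.le_induction with
    | base => intro j _; rfl
    | succ M hNM ih =>
      intro j hj
      have hj' : j ∈ Set.Icc (-(M : ℤ)) (M : ℤ) := by
        simp only [Set.mem_Icc] at hj ⊢; omega
      rw [hg_succ, hF1 M (g M) j hj']
      exact ih j hj
  set k : ℤ → Fin n := fun j => (g j.natAbs).1 j with hk
  have hkagree : ∀ N : ℕ, ∀ j ∈ Set.Icc (-(N : ℤ)) (N : ℤ), k j = (g N).1 j := by
    intro N j hj
    have h1 : j.natAbs ≤ N := by simp only [Set.mem_Icc] at hj; omega
    have h2 : j ∈ Set.Icc (-(j.natAbs : ℤ)) (j.natAbs : ℤ) := by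
      simp only [Set.mem_Icc]; omega
    rw [hk]
    exact (hagree j.natAbs N h1 j h2).symm
  have hbadk : ∀ N : ℕ, ¬ GoodSet V (CylSet f U N k) := by
    intro N
    rw [cylSet_congr f U N (hkagree N)]
    exact (g N).2
  obtain ⟨N, v, hvV, hsub⟩ := hexp V hVopen hVcover k
  exact hbadk N ⟨{v}, by simpa using hvV, by simpa [CylSet] using hsub⟩
end

section
/- Let f : X → X be a refinement expansive homeomorphism of a T1 topological space X. Then f is orbit expansive. -/
open Set

/-- Theorem 3.11 (first part): on a `T₁` space, refinement expansivity implies orbit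
expansivity. -/
theorem orbitExpansive_of_refinementExpansive {X : Type*} [TopologicalSpace X]
    [T1Space X] (f : X ≃ₜ X) (hf : RefinementExpansive f) :
    OrbitExpansive f := by
  obtain ⟨n, U, hopen, hcov, hr⟩ := hf
  refine ⟨n, U, hopen, hcov, ?_⟩
  intro x y hxy
  by_contra hne
  choose i hix hiy using hxy
  set V : Set (Set X) := {{x}ᶜ, {y}ᶜ} with hV
  have hVopen : ∀ v ∈ V, IsOpen v := by
    rintro v (rfl | rfl) <;> exact isOpen_compl_singleton
  have hVcov : ⋃₀ V = Set.univ := by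
    apply eq_univ_of_forall
    intro z
    by_cases hz : z = x
    · exact ⟨{y}ᶜ, Or.inr rfl, by simp [hz, hne]⟩
    · exact ⟨{x}ᶜ, Or.inl rfl, by simp [hz]⟩
  obtain ⟨N, v, hvV, hsub⟩ := hr V hVopen hVcov (fun j => i (-j))
  have hmem : ∀ z : X, (∀ m : ℤ, f.zpow m z ∈ U (i m)) →
      z ∈ ⋂ j ∈ Set.Icc (-(N:ℤ)) (N:ℤ), f.zpow j '' U (i (-j)) := by
    intro z hz
    simp only [Set.mem_iInter]
    intro j _
    refine ⟨f.zpow (-j) z, hz (-j), ?_⟩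
    show (f.toEquiv ^ j) ((f.toEquiv ^ (-j)) z) = z
    rw [← Equiv.Perm.mul_apply, ← zpow_add]
    simp
  have hx := hsub (hmem x hix)
  have hy := hsub (hmem y hiy)
  rcases hvV with rfl | rfl
  · exact hx rfl
  · exact hy rfl
end

section
/- Let f : X → X be a refinement expansive homeomorphism of a T1 topological space X. Then X has a countable basis for its topology. -/
open Set

lemma Homeomorph.zpow_isOpen {X : Type*} [TopologicalSpace X] (f : X ≃ₜ X) (m : ℤ)
    {U : Set X} (hU : IsOpen U) : IsOpen (f.zpow m '' U) := by
  induction m using Int.induction_on generalizing U with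
  | zero => simpa [Homeomorph.zpow] using hU
  | succ k ih =>
      have h1 : f.zpow ((k : ℤ) + 1) '' U = f.zpow k '' (f '' U) := by
        ext x
        simp only [Set.mem_image, Homeomorph.zpow]
        constructor
        · rintro ⟨u, hu, rfl⟩
          exact ⟨f u, ⟨u, hu, rfl⟩, by
            have : (f.toEquiv ^ ((k : ℤ) + 1)) u = (f.toEquiv ^ (k : ℤ)) (f u) := by
              rw [zpow_add_one]; rfl
            exact this.symm⟩
        · rintro ⟨v, ⟨u, hu, rfl⟩, rfl⟩
          exact ⟨u, hu, by rw [zpow_add_one]; rfl⟩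
      rw [h1]
      exact ih (f.isOpenMap U hU)
  | pred k ih =>
      have h1 : f.zpow (-(k : ℤ) - 1) '' U = f.zpow (-k) '' (f.symm '' U) := by
        ext x
        simp only [Set.mem_image, Homeomorph.zpow]
        constructor
        · rintro ⟨u, hu, rfl⟩
          refine ⟨f.symm u, ⟨u, hu, rfl⟩, ?_⟩
          have : (f.toEquiv ^ (-(k : ℤ) - 1)) u = (f.toEquiv ^ (-(k:ℤ))) (f.toEquiv⁻¹ u) := by
            rw [zpow_sub_one]; rfl
          rw [this]; rfl
        · rintro ⟨v, ⟨u, hu, rfl⟩, rfl⟩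
          refine ⟨u, hu, ?_⟩
          have : (f.toEquiv ^ (-(k : ℤ) - 1)) u = (f.toEquiv ^ (-(k:ℤ))) (f.toEquiv⁻¹ u) := by
            rw [zpow_sub_one]; rfl
          rw [this]; rfl
      rw [h1]
      exact ih (f.symm.isOpenMap U hU)

lemma Homeomorph.zpow_apply_zpow_neg {X : Type*} [TopologicalSpace X] (f : X ≃ₜ X)
    (j : ℤ) (x : X) : f.zpow j (f.zpow (-j) x) = x := by
  have : f.zpow j (f.zpow (-j) x) = (f.toEquiv ^ j * f.toEquiv ^ (-j)) x := rfl
  rw [this, ← zpow_add, add_neg_cancel, zpow_zero]; rfl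

/-- Theorem 3.11 (second part): a `T₁` space admitting a refinement expansive
homeomorphism has a countable basis for its topology. -/
theorem secondCountable_of_refinementExpansive {X : Type*} [TopologicalSpace X]
    [T1Space X] (f : X ≃ₜ X) (hf : RefinementExpansive f) :
    SecondCountableTopology X := by
  obtain ⟨n, U, hUopen, hUcov, hUexp⟩ := hf
  classical
  -- index type for the candidate basis
  set g : (Σ N : ℕ, (Set.Icc (-(N:ℤ)) (N:ℤ) → Fin n)) → Set X := fun p =>
    ⋂ j ∈ Set.Icc (-(p.1 : ℤ)) (p.1 : ℤ),
      f.zpow j '' U (if h : j ∈ Set.Icc (-(p.1:ℤ)) (p.1:ℤ) then p.2 ⟨j, h⟩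
        else p.2 ⟨0, by simp⟩) with hg
  have hbasis : TopologicalSpace.IsTopologicalBasis (Set.range g) := by
    apply TopologicalSpace.isTopologicalBasis_of_isOpen_of_nhds
    · rintro s ⟨⟨N, k⟩, rfl⟩
      have : Set.Finite (Set.Icc (-(N:ℤ)) (N:ℤ)) := Set.finite_Icc _ _
      exact this.isOpen_biInter fun j _ => f.zpow_isOpen j (hUopen _)
    · intro x V hxV hV
      -- choose indices for the orbit of x
      have hk : ∀ j : ℤ, ∃ i, f.zpow (-j) x ∈ U i := by
        intro j
        have : f.zpow (-j) x ∈ ⋃ i, U i := hUcov ▸ Set.mem_univ _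
        exact Set.mem_iUnion.mp this
      choose k hkmem using hk
      -- apply r-expansivity to the cover {V, {x}ᶜ}
      obtain ⟨N, v, hv, hsub⟩ := hUexp {V, {x}ᶜ}
        (by rintro w hw; rcases hw with rfl | rfl; exacts [hV, isOpen_compl_singleton])
        (by
          apply Set.eq_univ_of_forall
          intro y
          by_cases hy : y = x
          · exact ⟨V, Set.mem_insert _ _, hy ▸ hxV⟩
          · exact ⟨{x}ᶜ, Set.mem_insert_of_mem _ rfl, hy⟩) k
      have hxmem : x ∈ ⋂ j ∈ Set.Icc (-(N : ℤ)) (N : ℤ), f.zpow j '' U (k j) := by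
        simp only [Set.mem_iInter]
        intro j _
        exact ⟨f.zpow (-j) x, hkmem j, f.zpow_apply_zpow_neg j x⟩
      have hvV : v = V := by
        rcases hv with rfl | rfl
        · rfl
        · exact absurd (hsub hxmem) (by simp)
      refine ⟨⋂ j ∈ Set.Icc (-(N : ℤ)) (N : ℤ), f.zpow j '' U (k j),
        ⟨⟨N, fun j => k j.1⟩, ?_⟩, hxmem, hvV ▸ hsub⟩
      rw [hg]
      apply Set.iInter₂_congr
      intro j hj
      rw [dif_pos hj]
  have hcount : (Set.range g).Countable := Set.countable_range g
  exact hbasis.secondCountableTopology hcount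
end

section
/- Consider ℤ with the discrete topology and the homeomorphism f : ℤ → ℤ given by f(n) = n + 1. Then the two-element open cover {U_1, U_2} with U_1 = {n ∈ ℤ : n ≥ 0} and U_2 = {n ∈ ℤ : n < 0} is an o-expansive covering for f; in particular f is orbit expansive on a non-compact space. -/
open Set

lemma zpow_addRight_apply (n x : ℤ) :
    (Homeomorph.addRight (1 : ℤ)).zpow n x = x + n := by
  simp [Homeomorph.zpow, Homeomorph.addRight]

/-- Example 2.11: on `ℤ` (discrete topology) the translation `n ↦ n + 1` has the
o-expansive covering `{ {n ≥ 0}, {n < 0} }`; in particular it is an orbit expansive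
homeomorphism of a non-compact space. -/
theorem intTranslation_orbitExpansive :
    IsOExpansiveCover (Homeomorph.addRight (1 : ℤ))
        ![{n : ℤ | 0 ≤ n}, {n : ℤ | n < 0}] ∧
      OrbitExpansive (Homeomorph.addRight (1 : ℤ)) ∧ ¬ CompactSpace ℤ := by
  have hcov : IsOExpansiveCover (Homeomorph.addRight (1 : ℤ))
      ![{n : ℤ | 0 ≤ n}, {n : ℤ | n < 0}] := by
    refine ⟨fun i => isOpen_discrete _, ?_, ?_⟩
    · ext x
      simp only [Set.mem_iUnion, Set.mem_univ, iff_true]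
      rcases le_or_gt 0 x with h | h
      · exact ⟨0, by simpa using h⟩
      · exact ⟨1, by simpa using h⟩
    · intro x y h
      obtain ⟨i, hx, hy⟩ := h (-y)
      obtain ⟨j, hx', hy'⟩ := h (-x)
      rw [zpow_addRight_apply] at hx hy
      rw [zpow_addRight_apply] at hx' hy'
      fin_cases i <;> fin_cases j <;>
        simp only [Fin.mk_zero, Fin.mk_one, Matrix.cons_val_zero, Matrix.cons_val_one, Matrix.head_cons,
          Set.mem_setOf_eq] at hx hy hx' hy' <;> omega
  exact ⟨hcov, ⟨2, _, hcov⟩, not_compactSpace_iff.mpr inferInstance⟩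
end
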